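/- For every n ≥ 1 and every 0 ≤ k ≤ n−1, the number of Dyck vectors ν ∈ ℕ^n with |ν| = k equals ((n−k)/(n+k))·binom(n+k, k); moreover there are no Dyck vectors ν ∈ ℕ^n with |ν| ≥ n. -/

import Mathlib

open MvPolynomial

/-- The composition `c(ν)` obtained from a vector `ν ∈ ℕ^n` by deleting its zero
entries. -/
def vecComp {n : ℕ} (ν : Fin n →₀ ℕ) : List ℕ :=
  (List.ofFn fun i => ν i).filter (· != 0)

/-- A polynomial is quasi-symmetric if monomials whose exponent vectors have the same
underlying composition have equal coefficients. -/
def IsQuasiSymmetric {n : ℕ} (P : MvPolynomial (Fin n) ℚ) : Prop :=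
  ∀ ν μ : Fin n →₀ ℕ, vecComp ν = vecComp μ → coeff ν P = coeff μ P

/-- The ideal `J_n` generated by all quasi-symmetric polynomials with zero constant
term. -/
noncomputable def Jideal (n : ℕ) : Ideal (MvPolynomial (Fin n) ℚ) :=
  Ideal.span {P | IsQuasiSymmetric P ∧ constantCoeff P = 0}

/-- A vector `ν ∈ ℕ^n` is Dyck if `ν 0 + ⋯ + ν j ≤ j` for every `j` (0-indexed); in
1-indexed terms, `ν_1 + ⋯ + ν_ℓ ≤ ℓ - 1` for every `1 ≤ ℓ ≤ n`. -/
def IsDyck {n : ℕ} (ν : Fin n →₀ ℕ) : Prop :=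
  ∀ j : Fin n, ∑ i ∈ Finset.Iic j, ν i ≤ (j : ℕ)

/-- A vector `ν ∈ ℕ^n` is transdiagonal if `ν_1 + ⋯ + ν_ℓ ≥ ℓ` for some `1 ≤ ℓ ≤ n`. -/
def IsTransdiagonal {n : ℕ} (ν : Fin n →₀ ℕ) : Prop :=
  ∃ j : Fin n, (j : ℕ) < ∑ i ∈ Finset.Iic j, ν i

/-- A word is transdiagonal if `ν_1 + ⋯ + ν_k ≥ k` for some `1 ≤ k ≤ length`. -/
def IsTransdiagonalL (l : List ℕ) : Prop :=
  ∃ k, 1 ≤ k ∧ k ≤ l.length ∧ k ≤ (l.take k).sum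

/-- A composition: a (possibly empty) list of positive integers. -/
def IsComposition (α : List ℕ) : Prop := ∀ a ∈ α, 0 < a

/-- The monomial quasi-symmetric polynomial `M_α` in the ordered list of variables `v`:
the sum of `v_{s 1}^{α_1} ⋯ v_{s k}^{α_k}` over strictly increasing position choices
`s`. It is `0` when `α` has more than `length v` parts, and `1` when `α` is empty. -/
noncomputable def Mqs (n : ℕ) (v : List (Fin n)) (α : List ℕ) : MvPolynomial (Fin n) ℚ :=
  ∑ s ∈ (Finset.powersetCard α.length (Finset.univ : Finset (Fin v.length))).attach,
    ∏ i : Fin α.length,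
      X (v.get (s.1.orderEmbOfFin (Finset.mem_powersetCard_univ.mp s.2) i)) ^ α.get i

/-- The set `D(α)` of partial sums of a composition (excluding the total sum). -/
def Dset (α : List ℕ) : Finset ℕ :=
  ((List.range (α.length - 1)).map fun i => (α.take (i + 1)).sum).toFinset

/-- The composition `α_d(S)` of `d` whose partial-sum set is `S ⊆ {1,…,d-1}`:
successive differences of the sorted elements of `S` together with `d`. -/
def compOfD (d : ℕ) (S : Finset ℕ) : List ℕ :=
  (List.zipWith (fun x y => x - y) (S.sort (· ≤ ·) ++ [d]) (0 :: S.sort (· ≤ ·))).filter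
    (· != 0)

/-- The fundamental quasi-symmetric polynomial `F_α = ∑_{β ⪰ α} M_β` in the ordered
list of variables `v`; the sum is over the compositions `β` of `|α|` refining `α`,
encoded by the subsets of `{1, …, |α|-1}` containing `D(α)`. -/
noncomputable def FqsIn (n : ℕ) (v : List (Fin n)) (α : List ℕ) :
    MvPolynomial (Fin n) ℚ :=
  ∑ S ∈ (Finset.Icc 1 (α.sum - 1)).powerset.filter (fun S => Dset α ⊆ S),
    Mqs n v (compOfD α.sum S)

/-- The fundamental quasi-symmetric polynomial `F_α` in the variables `x_1, …, x_n`. -/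
noncomputable def Fqsym (n : ℕ) (α : List ℕ) : MvPolynomial (Fin n) ℚ :=
  FqsIn n (List.finRange n) α

/-- Strip the trailing zeros of a word. -/
def stripZeros (l : List ℕ) : List ℕ := (l.reverse.dropWhile (· == 0)).reverse

/-- The recursion defining the family `G`, with a fuel parameter.  Writing the word as
`w0aβ0^*` (with the displayed `0` the last zero before the final nonzero letter, `a ≥ 1`
and `β` a composition), one has `G_{w0aβ0^*} = G_{waβ0^*} - x_k G_{w(a-1)β0^*}` where
`k - 1 = length w`; if the word is `α0^*` with `α` a composition, `G_{α0^*} = F_α`.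
The fuel is an upper bound for the position of the last nonzero letter; it is never
exhausted when the initial fuel is at least `(stripZeros l).length`, since this length
strictly decreases along the recursion, so `Gaux n (stripZeros l).length l` (and a
fortiori `Gaux n n l` for words of length `n`) computes `G` faithfully. -/
noncomputable def Gaux (n : ℕ) : ℕ → List ℕ → MvPolynomial (Fin n) ℚ
  | 0, l => Fqsym n (stripZeros l)
  | fuel + 1, l =>
    let c := stripZeros l
    if c.all (· != 0) then Fqsym n c
    else
      let z := l.length - c.length
      let s := c.reverse
      let aβ := (s.takeWhile (· != 0)).reverse
      let w := ((s.dropWhile (· != 0)).reverse).dropLast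
      let a := aβ.headI
      let β := aβ.tail
      Gaux n fuel (w ++ a :: (β ++ List.replicate (z + 1) 0)) -
        (if h : w.length < n then X (⟨w.length, h⟩ : Fin n) else 0) *
          Gaux n fuel (w ++ (a - 1) :: (β ++ List.replicate (z + 1) 0))

/-- The polynomial `G_ε` for `ε ∈ ℕ^n`. -/
noncomputable def Gpoly {n : ℕ} (ε : Fin n →₀ ℕ) : MvPolynomial (Fin n) ℚ :=
  Gaux n n (List.ofFn fun i => ε i)

/-- Graded lexicographic order on exponent vectors: `ν < μ` iff `|ν| < |μ|`, or
`|ν| = |μ|` and the first nonzero entry of `μ - ν` is positive. -/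
def grlexLt {n : ℕ} (ν μ : Fin n →₀ ℕ) : Prop :=
  (∑ i, ν i) < (∑ i, μ i) ∨
    ((∑ i, ν i) = (∑ i, μ i) ∧ ∃ i : Fin n, (∀ j, j < i → ν j = μ j) ∧ ν i < μ i)

/-- The list of all shuffles of two words. -/
def shuffles : List ℕ → List ℕ → List (List ℕ)
  | [], v => [v]
  | u, [] => [u]
  | a :: u, b :: v =>
      (shuffles u (b :: v)).map (a :: ·) ++ (shuffles (a :: u) v).map (b :: ·)
termination_by u v => u.length + v.length

/-- The descent set `𝒟(u) = {i : u_i > u_{i+1}}` (1-indexed positions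
`1 ≤ i ≤ length u - 1`). -/
def descents (u : List ℕ) : Finset ℕ :=
  (Finset.Icc 1 (u.length - 1)).filter fun i => u.getD i 0 < u.getD (i - 1) 0

/-- The constant-coefficient differential operator `P(∂)` obtained from `P` by
substituting `∂/∂x_i` for each variable `x_i`. -/
noncomputable def diffOp (n : ℕ) (P : MvPolynomial (Fin n) ℚ) :
    Module.End ℚ (MvPolynomial (Fin n) ℚ) :=
  ∑ ν ∈ P.support, P.coeff ν •
    (List.finRange n).foldr (fun i f => ((pderiv i).toLinearMap) ^ (ν i) * f) 1

/-- The pairing `⟨P, Q⟩ = (P(∂) Q)(0)`, as a linear map in `Q`. -/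
noncomputable def pairingLM (n : ℕ) (P : MvPolynomial (Fin n) ℚ) :
    MvPolynomial (Fin n) ℚ →ₗ[ℚ] ℚ :=
  ((aeval (fun _ : Fin n => (0 : ℚ))).toLinearMap).comp (diffOp n P)

/-- The orthogonal complement `K^⊥` of an ideal `K` with respect to the pairing
`⟨P, Q⟩ = (P(∂) Q)(0)`. -/
noncomputable def perp (n : ℕ) (K : Ideal (MvPolynomial (Fin n) ℚ)) :
    Submodule ℚ (MvPolynomial (Fin n) ℚ) :=
  ⨅ P ∈ (K : Set (MvPolynomial (Fin n) ℚ)), LinearMap.ker (pairingLM n P)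

/-- The space `SH_n = J_n^⊥` of super-covariant polynomials. -/
noncomputable def SHspace (n : ℕ) : Submodule ℚ (MvPolynomial (Fin n) ℚ) :=
  perp n (Jideal n)

/-- The ideal `I_n` generated by all symmetric polynomials with zero constant term. -/
noncomputable def Iideal (n : ℕ) : Ideal (MvPolynomial (Fin n) ℚ) :=
  Ideal.span {P | P.IsSymmetric ∧ constantCoeff P = 0}

/-- The generating series `S = ∑_{n ≥ 1} ∑_{k=0}^{n-1} ((n-k)/(n+k))·C(n+k,k) t^k x^n`
in `ℚ[[t,x]]`, where `t` is the variable of index `0` and `x` that of index `1`. -/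
noncomputable def Sgen : MvPowerSeries (Fin 2) ℚ :=
  fun d =>
    if d 0 < d 1 then
      (((d 1 - d 0) * (d 1 + d 0).choose (d 0) : ℕ) : ℚ) / ((d 1 + d 0 : ℕ) : ℚ)
    else 0

open Classical in
/-- Dyck vectors of sum `k`, as a finset of functions. -/
noncomputable def Dck (n k : ℕ) : Finset (Fin n → ℕ) :=
  (Fintype.piFinset fun _ => Finset.range (k + 1)).filter
    (fun ν => (∀ j : Fin n, ∑ i ∈ Finset.Iic j, ν i ≤ (j : ℕ)) ∧ ∑ i, ν i = k)

lemma mem_Dck {n k : ℕ} {ν : Fin n → ℕ} :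
    ν ∈ Dck n k ↔ (∀ j : Fin n, ∑ i ∈ Finset.Iic j, ν i ≤ (j : ℕ)) ∧ ∑ i, ν i = k := by
  classical
  simp only [Dck, Finset.mem_filter, Fintype.mem_piFinset, Finset.mem_range]
  refine ⟨fun h => h.2, fun h => ⟨fun i => ?_, h⟩⟩
  have : ν i ≤ ∑ j, ν j := Finset.single_le_sum (fun j _ => Nat.zero_le _) (Finset.mem_univ i)
  omega

lemma Dck_zero (n : ℕ) : Dck n 0 = {fun _ => 0} := by
  ext ν
  simp only [mem_Dck, Finset.mem_singleton]
  constructor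
  · rintro ⟨-, h⟩
    funext i
    have := (Finset.sum_eq_zero_iff.mp h) i (Finset.mem_univ i)
    simpa using this
  · rintro rfl
    simp

lemma Dck_empty {n k : ℕ} (hk : n ≤ k) (hn : 1 ≤ n) : Dck n k = ∅ := by
  obtain ⟨m, rfl⟩ : ∃ m, n = m + 1 := ⟨n - 1, by omega⟩
  ext ν
  simp only [mem_Dck, Finset.notMem_empty, iff_false, not_and]
  intro hd hs
  have h1 := hd (Fin.last m)
  have h2 : Finset.Iic (Fin.last m) = Finset.univ := by
    ext i; simp [Fin.le_last]
  rw [h2, hs] at h1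
  simp [Fin.val_last] at h1
  omega

lemma Iic_castSucc' {n : ℕ} (j : Fin n) :
    Finset.Iic j.castSucc = (Finset.Iic j).map Fin.castSuccEmb := by
  ext i
  simp only [Finset.mem_Iic, Finset.mem_map, Fin.coe_castSuccEmb]
  constructor
  · intro h
    have hi : (i : ℕ) ≤ (j : ℕ) := by simpa [Fin.le_def] using h
    refine ⟨⟨i, lt_of_le_of_lt hi j.isLt⟩, hi, ?_⟩
    rfl
  · rintro ⟨x, hx, rfl⟩
    exact Fin.castSucc_le_castSucc_iff.mpr hx

lemma Dck_succ (n k : ℕ) (hk : k ≤ n) :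
    Dck (n + 1) k = (Finset.range (k + 1)).biUnion
      (fun a => (Dck n (k - a)).image (fun μ => Fin.snoc μ a)) := by
  ext ν
  simp only [Finset.mem_biUnion, Finset.mem_range, Finset.mem_image, mem_Dck]
  constructor
  · rintro ⟨hd, hs⟩
    have hlast : ν (Fin.last n) ≤ k := by
      rw [← hs]
      exact Finset.single_le_sum (fun j _ => Nat.zero_le _) (Finset.mem_univ _)
    refine ⟨ν (Fin.last n), by omega, Fin.init ν, ⟨?_, ?_⟩, Fin.snoc_init_self ν⟩
    · intro j
      have h := hd j.castSucc
      rw [Iic_castSucc', Finset.sum_map] at h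
      simpa [Fin.init] using h
    · have h := Fin.sum_univ_castSucc ν
      rw [hs] at h
      have : ∑ i : Fin n, Fin.init ν i = ∑ i : Fin n, ν i.castSucc := by
        simp [Fin.init]
      omega
  · rintro ⟨a, ha, μ, ⟨hd, hs⟩, rfl⟩
    have hsum : ∑ i, Fin.snoc μ a i = k := by
      rw [Fin.sum_univ_castSucc]
      simp only [Fin.snoc_castSucc, Fin.snoc_last, hs]
      omega
    refine ⟨?_, hsum⟩
    intro j
    refine Fin.lastCases ?_ ?_ j
    · have h2 : Finset.Iic (Fin.last n) = (Finset.univ : Finset (Fin (n + 1))) := by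
        ext i; simp [Fin.le_last]
      rw [h2, hsum]
      simpa using hk
    · intro j'
      rw [Iic_castSucc', Finset.sum_map]
      simp only [Fin.coe_castSuccEmb, Fin.snoc_castSucc, Fin.coe_castSucc]
      exact hd j'

lemma card_Dck_succ (n k : ℕ) (hk : k ≤ n) :
    (Dck (n + 1) k).card = ∑ a ∈ Finset.range (k + 1), (Dck n (k - a)).card := by
  rw [Dck_succ n k hk, Finset.card_biUnion]
  · refine Finset.sum_congr rfl fun a _ => ?_
    apply Finset.card_image_of_injective
    intro μ₁ μ₂ h
    have := congrArg Fin.init h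
    simpa [Fin.init_snoc] using this
  · intro a _ b _ hab
    simp only [Finset.disjoint_left, Finset.mem_image]
    rintro ν ⟨μ₁, -, rfl⟩ ⟨μ₂, -, h⟩
    apply hab
    have := congrArg (fun f => f (Fin.last n)) h
    simpa using this.symm

lemma Dck_card_eq (n : ℕ) (hn : 1 ≤ n) : ∀ k, k ≤ n →
    ((n : ℤ) + k) * (Dck n k).card = ((n : ℤ) - k) * ((n + k).choose k : ℤ) := by
  induction n, hn using Nat.le_induction with
  | base =>
    intro k hk
    interval_cases k
    · simp [Dck_zero]
    · rw [Dck_empty le_rfl le_rfl]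
      norm_num
  | succ n hn IH =>
    intro k hk
    induction k with
    | zero => simp [Dck_zero]
    | succ k IHk =>
      rcases eq_or_lt_of_le hk with h | h
      · have hkn : k = n := by omega
        subst hkn
        rw [Dck_empty (by omega) (by omega)]
        simp
      · have hk1 : k + 1 ≤ n := by omega
        have hrec : (Dck (n + 1) (k + 1)).card
            = (Dck (n + 1) k).card + (Dck n (k + 1)).card := by
          rw [card_Dck_succ n (k + 1) hk1, card_Dck_succ n k (by omega),
            Finset.sum_range_succ' _ (k + 1)]
          simp only [Nat.succ_sub_succ, Nat.sub_zero]
        have h1 := IHk (by omega)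
        have h2 := IH (k + 1) hk1
        have e2 : n + (k + 1) = n + 1 + k := by omega
        rw [e2] at h2
        set c1 : ℤ := ((Dck (n + 1) k).card : ℤ) with hc1
        set c2 : ℤ := ((Dck n (k + 1)).card : ℤ) with hc2
        set u : ℤ := ((n + 1 + k).choose k : ℤ) with hu
        set v : ℤ := ((n + 1 + k).choose (k + 1) : ℤ) with hv
        have hpascal : ((n + 2 + k).choose (k + 1) : ℤ) = u + v := by
          have e3 : n + 2 + k = (n + 1 + k) + 1 := by omega
          rw [e3, Nat.choose_succ_succ (n + 1 + k) k, hu, hv]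
          push_cast
          ring
        have hratio : ((k : ℤ) + 1) * v = ((n : ℤ) + 1) * u := by
          have hch := Nat.choose_succ_right_eq (n + 1 + k) k
          have h' : n + 1 + k - k = n + 1 := by omega
          rw [h'] at hch
          have hch2 := congrArg (fun x : ℕ => (x : ℤ)) hch
          push_cast at hch2
          rw [hu, hv]
          linarith [hch2]
        have hh1 : ((n : ℤ) + 1 + k) * c1 = ((n : ℤ) + 1 - k) * u := by
          push_cast at h1
          linear_combination h1
        have hh2 : ((n : ℤ) + 1 + k) * c2 = ((n : ℤ) - (k + 1)) * v := by
          push_cast at h2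
          linear_combination h2
        have hM : ((n : ℤ) + 1 + k) ≠ 0 := by positivity
        have key : ((n : ℤ) + 1 + k) * (((n : ℤ) + k + 2) * (c1 + c2))
            = ((n : ℤ) + 1 + k) * (((n : ℤ) - k) * (u + v)) := by
          linear_combination ((n : ℤ) + k + 2) * hh1 + ((n : ℤ) + k + 2) * hh2 - 2 * hratio
        have key2 : ((n : ℤ) + k + 2) * (c1 + c2) = ((n : ℤ) - k) * (u + v) :=
          mul_left_cancel₀ hM key
        have egoal : n + 1 + (k + 1) = n + 2 + k := by omega
        rw [hrec, egoal, hpascal]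
        push_cast
        push_cast at key2
        linear_combination key2

/-- for `0 ≤ k ≤ n-1`, the number of Dyck vectors `ν ∈ ℕ^n` with
`|ν| = k` is `((n-k)/(n+k))·C(n+k,k)` (stated multiplicatively), and there are no Dyck
vectors of size `≥ n`. -/
theorem card_dyck_vectors_of_size (n k : ℕ) (hn : 1 ≤ n) :
    (k ≤ n - 1 →
      {ν : Fin n →₀ ℕ | IsDyck ν ∧ ∑ i, ν i = k}.Finite ∧
        (n + k) * {ν : Fin n →₀ ℕ | IsDyck ν ∧ ∑ i, ν i = k}.ncard =
          (n - k) * (n + k).choose k) ∧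
    (∀ ν : Fin n →₀ ℕ, IsDyck ν → ∑ i, ν i < n) := by
  constructor
  · intro hk
    have hset : {ν : Fin n →₀ ℕ | IsDyck ν ∧ ∑ i, ν i = k}
        = ↑((Dck n k).map (Finsupp.equivFunOnFinite.symm.toEmbedding)) := by
      ext ν
      simp only [Set.mem_setOf_eq, Finset.coe_map, Set.mem_image, Finset.mem_coe, mem_Dck,
        Equiv.coe_toEmbedding]
      constructor
      · rintro ⟨hd, hs⟩
        refine ⟨fun i => ν i, ⟨hd, hs⟩, ?_⟩
        ext i
        simp
      · rintro ⟨f, ⟨hd, hs⟩, rfl⟩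
        constructor
        · intro j
          simpa [IsDyck, Finsupp.coe_equivFunOnFinite_symm] using hd j
        · simpa [Finsupp.coe_equivFunOnFinite_symm] using hs
    refine ⟨by rw [hset]; exact Finset.finite_toSet _, ?_⟩
    have hcard : {ν : Fin n →₀ ℕ | IsDyck ν ∧ ∑ i, ν i = k}.ncard = (Dck n k).card := by
      rw [hset, Set.ncard_coe_finset, Finset.card_map]
    rw [hcard]
    have h := Dck_card_eq n hn k (by omega)
    have hub : k ≤ n := by omega
    zify [hub]
    linear_combination h
  · intro ν hd
    obtain ⟨m, rfl⟩ : ∃ m, n = m + 1 := ⟨n - 1, by omega⟩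
    have h1 := hd (Fin.last m)
    have h2 : Finset.Iic (Fin.last m) = (Finset.univ : Finset (Fin (m + 1))) := by
      ext i; simp [Fin.le_last]
    rw [h2] at h1
    simp only [Fin.val_last] at h1
    omega
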